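/- The discriminant of the cubic polynomial p₆ + p₄T − T³ in the variable T, namely the polynomial Δ = 4p₄³ − 27p₆² ∈ ℂ[x₀,x₁,x₂], is a nonzero homogeneous polynomial of degree 12. -/
import Mathlib


open MvPolynomial

/-- `p₄ = x₀³x₁ + x₀x₂³ + x₁³x₂`. -/
noncomputable def p4 : MvPolynomial (Fin 3) ℂ :=
  X 0 ^ 3 * X 1 + X 0 * X 2 ^ 3 + X 1 ^ 3 * X 2

/-- `p₆ = x₀⁵x₂ + x₀x₁⁵ + x₁x₂⁵ − 5x₀²x₁²x₂²`. -/
noncomputable def p6 : MvPolynomial (Fin 3) ℂ :=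
  X 0 ^ 5 * X 2 + X 0 * X 1 ^ 5 + X 1 * X 2 ^ 5 - 5 * X 0 ^ 2 * X 1 ^ 2 * X 2 ^ 2

lemma p4_hom : p4.IsHomogeneous 4 := by
  unfold p4
  apply IsHomogeneous.add
  apply IsHomogeneous.add
  · exact ((isHomogeneous_X _ _).pow 3).mul (isHomogeneous_X _ _)
  · exact (isHomogeneous_X _ _).mul ((isHomogeneous_X _ _).pow 3)
  · exact ((isHomogeneous_X _ _).pow 3).mul (isHomogeneous_X _ _)

lemma p6_hom : p6.IsHomogeneous 6 := by
  unfold p6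
  apply IsHomogeneous.sub
  apply IsHomogeneous.add
  apply IsHomogeneous.add
  · exact ((isHomogeneous_X _ _).pow 5).mul (isHomogeneous_X _ _)
  · exact (isHomogeneous_X _ _).mul ((isHomogeneous_X _ _).pow 5)
  · exact (isHomogeneous_X _ _).mul ((isHomogeneous_X _ _).pow 5)
  · have : (5 : MvPolynomial (Fin 3) ℂ).IsHomogeneous 0 := isHomogeneous_C _ _
    have h := ((this.mul ((isHomogeneous_X (R := ℂ) (i := (0 : Fin 3))).pow 2)).mul
      ((isHomogeneous_X (R := ℂ) (i := (1 : Fin 3))).pow 2)).mul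
      ((isHomogeneous_X (R := ℂ) (i := (2 : Fin 3))).pow 2)
    simpa using h

/-- The discriminant `Δ = 4p₄³ − 27p₆²` of the cubic `p₆ + p₄T − T³` is a
nonzero homogeneous polynomial of degree 12. -/
theorem discriminant_nonzero_homogeneous_deg12 :
    (4 * p4 ^ 3 - 27 * p6 ^ 2) ≠ 0 ∧
      (4 * p4 ^ 3 - 27 * p6 ^ 2).IsHomogeneous 12 := by
  constructor
  · intro h
    have := congrArg (eval ![1,1,0]) h
    simp [p4, p6] at this
    norm_num at this
  · have h4 : ((4 : MvPolynomial (Fin 3) ℂ) * p4 ^ 3).IsHomogeneous 12 := by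
      have : ((4 : MvPolynomial (Fin 3) ℂ)).IsHomogeneous 0 := isHomogeneous_C _ _
      simpa using this.mul (p4_hom.pow 3)
    have h6 : ((27 : MvPolynomial (Fin 3) ℂ) * p6 ^ 2).IsHomogeneous 12 := by
      have : ((27 : MvPolynomial (Fin 3) ℂ)).IsHomogeneous 0 := isHomogeneous_C _ _
      simpa using this.mul (p6_hom.pow 2)
    exact h4.sub h6
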